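/- arXiv:2506.07543 — 2 statements merged into one kernel-verified Lean document; each statement's English description precedes it below -/
import Mathlib

section
/- Let Ω ⊆ ℝ^n be a bounded domain, and let g : Ω → ℝ^n be measurable and injective with locally integrable Jacobian J_g > 0 a.e., satisfying the area formula ∫_A J_g dx = |g(A)| for every measurable A ⊆ Ω, and suppose ∫_Ω φ(J_g) dx ≤ C₁ where φ : (0,∞) → [0,∞) is positive, convex, and lim_{t→0+} φ(t) = ∞. Then there exists a monotone function Φ : (0,∞) → (0,∞), depending only on C₁, φ, and |Ω|, with lim_{s→0+} Φ(s) = 0, such that Φ(|A|) ≤ |g(A)| for each measurable A ⊆ Ω. -/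
open MeasureTheory Set Filter Topology
open scoped ENNReal

/-- Let `Ω ⊆ ℝⁿ` be a bounded domain and `φ : (0,∞) → [0,∞)` positive,
convex, with `φ(t) → ∞` as `t → 0⁺`, and `C₁ ≥ 0`.  Then there is a monotone
`Φ : (0,∞) → (0,∞)` (depending only on `C₁`, `φ` and `Ω`) with `Φ(s) → 0` as `s → 0⁺`,
such that for every injective measurable `g : Ω → ℝⁿ` with Jacobian `Jg > 0` a.e.
satisfying the area formula `∫_A Jg = |g(A)|` and `∫_Ω φ(Jg) ≤ C₁`, one has
`Φ(|A|) ≤ |g(A)|` for each measurable `A ⊆ Ω`. -/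
theorem stmt6 (n : ℕ) (Ω : Set (Fin n → ℝ)) (hΩopen : IsOpen Ω)
    (hΩconn : IsConnected Ω) (hΩbd : Bornology.IsBounded Ω)
    (φ : ℝ → ℝ) (hφpos : ∀ t ∈ Ioi (0 : ℝ), 0 < φ t) (hφconv : ConvexOn ℝ (Ioi 0) φ)
    (hφ0 : Tendsto φ (𝓝[>] 0) atTop)
    (C₁ : ℝ) (hC₁ : 0 ≤ C₁) :
    ∃ Φ : ℝ≥0∞ → ℝ≥0∞, Monotone Φ ∧ (∀ s, 0 < s → 0 < Φ s) ∧
      Tendsto Φ (𝓝[>] 0) (𝓝 0) ∧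
      ∀ (g : (Fin n → ℝ) → (Fin n → ℝ)) (Jg : (Fin n → ℝ) → ℝ),
        Measurable g → Set.InjOn g Ω → Measurable Jg →
        (∀ᵐ x ∂(volume.restrict Ω), 0 < Jg x) →
        (∀ A : Set (Fin n → ℝ), A ⊆ Ω → MeasurableSet A →
          ∫⁻ x in A, ENNReal.ofReal (Jg x) = volume (g '' A)) →
        (∫⁻ x in Ω, ENNReal.ofReal (φ (Jg x)) ≤ ENNReal.ofReal C₁) →
        ∀ A : Set (Fin n → ℝ), A ⊆ Ω → MeasurableSet A →
          Φ (volume A) ≤ volume (g '' A) := by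
  -- choose thresholds δ k with φ ≥ k on (0, δ k)
  have hδex : ∀ k : ℕ, ∃ δ : ℝ, 0 < δ ∧ δ ≤ 1 ∧ ∀ u : ℝ, 0 < u → u < δ → (k : ℝ) ≤ φ u := by
    intro k
    have h : ∀ᶠ u in 𝓝[>] (0:ℝ), (k : ℝ) ≤ φ u := hφ0.eventually (eventually_ge_atTop _)
    rcases mem_nhdsGT_iff_exists_Ioo_subset.1 h with ⟨u, hu, hsub⟩
    refine ⟨min u 1, lt_min hu one_pos, min_le_right _ _, fun v hv hvu => ?_⟩
    exact hsub ⟨hv, hvu.trans_le (min_le_left _ _)⟩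
  choose δ hδpos hδle1 hδspec using hδex
  set Φ : ℝ≥0∞ → ℝ≥0∞ := fun s =>
    ⨆ k : ℕ, ENNReal.ofReal (δ (k + 1)) * (s - ENNReal.ofReal C₁ / ((k + 1 : ℕ) : ℝ≥0∞))
    with hΦ
  have hΦle : ∀ s, Φ s ≤ s := by
    intro s
    refine iSup_le fun k => ?_
    calc ENNReal.ofReal (δ (k + 1)) * (s - ENNReal.ofReal C₁ / ((k + 1 : ℕ) : ℝ≥0∞))
        ≤ 1 * s := mul_le_mul' (ENNReal.ofReal_le_one.2 (hδle1 _)) tsub_le_self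
      _ = s := one_mul s
  refine ⟨Φ, ?_, ?_, ?_, ?_⟩
  · intro a b hab
    exact iSup_mono fun k => mul_le_mul_right (tsub_le_tsub_right hab _) _
  · intro s hs
    have htend : Tendsto (fun k : ℕ => ENNReal.ofReal C₁ / ((k + 1 : ℕ) : ℝ≥0∞)) atTop (𝓝 0) := by
      have h1 : Tendsto (fun k : ℕ => (((k:ℕ) : ℝ≥0∞))⁻¹) atTop (𝓝 0) :=
        ENNReal.tendsto_inv_nat_nhds_zero
      have h2 := h1.comp (tendsto_add_atTop_nat 1)
      have := ENNReal.Tendsto.const_mul (a := ENNReal.ofReal C₁) h2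
        (Or.inr ENNReal.ofReal_ne_top)
      simpa [div_eq_mul_inv, mul_zero, Function.comp] using this
    obtain ⟨k, hk⟩ := (htend.eventually_lt_const hs).exists
    have hpos : 0 < ENNReal.ofReal (δ (k + 1)) * (s - ENNReal.ofReal C₁ / ((k + 1 : ℕ) : ℝ≥0∞)) := by
      apply ENNReal.mul_pos
      · simp [ENNReal.ofReal_pos, hδpos (k+1)]
      · exact (tsub_pos_of_lt hk).ne'
    exact hpos.trans_le (le_iSup (fun k : ℕ => ENNReal.ofReal (δ (k + 1)) * (s - ENNReal.ofReal C₁ / ((k + 1 : ℕ) : ℝ≥0∞))) k)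
  · exact tendsto_of_tendsto_of_tendsto_of_le_of_le tendsto_const_nhds
      (tendsto_id.mono_left nhdsWithin_le_nhds) (fun s => zero_le) hΦle
  · intro g Jg hgmeas hginj hJmeas hJpos harea hint A hAΩ hAmeas
    rw [← harea A hAΩ hAmeas]
    refine iSup_le fun k => ?_
    set t := δ (k + 1) with ht
    set S := A ∩ {x | t ≤ Jg x} with hS
    have hSmeas : MeasurableSet S := hAmeas.inter (hJmeas measurableSet_Ici)
    set B := A ∩ {x | 0 < Jg x ∧ Jg x < t} with hB
    have hBmeas : MeasurableSet B :=
      hAmeas.inter ((hJmeas measurableSet_Ioi).inter (hJmeas measurableSet_Iio))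
    -- Chebyshev: volume B ≤ C₁ / (k+1)
    have hcheb : volume B ≤ ENNReal.ofReal C₁ / ((k + 1 : ℕ) : ℝ≥0∞) := by
      have h1 : ((k + 1 : ℕ) : ℝ≥0∞) * volume B ≤ ∫⁻ x in B, ENNReal.ofReal (φ (Jg x)) := by
        have := setLIntegral_mono_ae' (s := B) (μ := volume)
          (f := fun _ => ((k + 1 : ℕ) : ℝ≥0∞)) (g := fun x => ENNReal.ofReal (φ (Jg x)))
          hBmeas
          (ae_of_all _ fun x hx => by
            have := hδspec (k+1) (Jg x) hx.2.1 hx.2.2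
            calc ((k + 1 : ℕ) : ℝ≥0∞) = ENNReal.ofReal ((k+1 : ℕ) : ℝ) := by
                  exact (ENNReal.ofReal_natCast _).symm
              _ ≤ ENNReal.ofReal (φ (Jg x)) := ENNReal.ofReal_le_ofReal this)
        calc ((k + 1 : ℕ) : ℝ≥0∞) * volume B = ∫⁻ _ in B, ((k + 1 : ℕ) : ℝ≥0∞) := by
              rw [setLIntegral_const, mul_comm]
          _ ≤ _ := this
      have h2 : ∫⁻ x in B, ENNReal.ofReal (φ (Jg x)) ≤ ENNReal.ofReal C₁ :=
        le_trans (lintegral_mono_set (fun x hx => hAΩ hx.1)) hint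
      rw [ENNReal.le_div_iff_mul_le (Or.inl (by simp)) (Or.inl (by simp)), mul_comm]
      exact (h1.trans h2)
    -- volume (A \ S) ≤ volume B  (a.e. Jg > 0 on Ω)
    have hdiff : volume (A \ S) ≤ volume B := by
      have hAS : volume (A \ S) = (volume.restrict Ω) (A \ S) := by
        rw [Measure.restrict_apply (hAmeas.diff hSmeas)]
        congr 1
        exact (inter_eq_left.2 ((diff_subset).trans hAΩ)).symm
      have hBv : (volume.restrict Ω) B ≤ volume B :=
        Measure.restrict_le_self _ -- works? restrict ≤ self as measures
      rw [hAS]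
      refine le_trans (measure_mono_ae ?_) hBv
      filter_upwards [hJpos] with x hx hxAS
      exact ⟨hxAS.1, hx, lt_of_not_ge fun h => hxAS.2 ⟨hxAS.1, h⟩⟩
    have hSvol : volume A - ENNReal.ofReal C₁ / ((k + 1 : ℕ) : ℝ≥0∞) ≤ volume S := by
      rw [tsub_le_iff_right]
      calc volume A ≤ volume (S ∪ (A \ S)) := measure_mono (fun x hx => by
            by_cases h : x ∈ S
            · exact Or.inl h
            · exact Or.inr ⟨hx, h⟩)
        _ ≤ volume S + volume (A \ S) := measure_union_le _ _
        _ ≤ volume S + ENNReal.ofReal C₁ / ((k + 1 : ℕ) : ℝ≥0∞) :=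
            add_le_add (le_refl _) (hdiff.trans hcheb)
    calc ENNReal.ofReal t * (volume A - ENNReal.ofReal C₁ / ((k + 1 : ℕ) : ℝ≥0∞))
        ≤ ENNReal.ofReal t * volume S := mul_le_mul_right hSvol _
      _ = ∫⁻ _ in S, ENNReal.ofReal t := (setLIntegral_const S _).symm ▸ rfl
      _ ≤ ∫⁻ x in S, ENNReal.ofReal (Jg x) :=
          setLIntegral_mono (ENNReal.measurable_ofReal.comp hJmeas)
            (fun x hx => ENNReal.ofReal_le_ofReal hx.2)
      _ ≤ ∫⁻ x in A, ENNReal.ofReal (Jg x) := lintegral_mono_set inter_subset_left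
end

section
/- Let A ⊆ ℝ^n be a bounded set of finite perimeter with |A| > 0. If A is written as a finite disjoint union of sets K₁,…,K_m of finite perimeter, each with |K_i| < 2ε, then |A| ≤ C ε^{1/n} ∑_{i=1}^m P(K_i, ℝ^n), where C depends only on n. -/
open MeasureTheory Set Filter Topology Convolution
open scoped ENNReal NNReal

/-- The perimeter `P(A, ℝⁿ)` of a set `A ⊆ ℝⁿ`, defined in the distributional (Gauss–Green)
sense as the supremum of `∫_A div φ` over `C¹` compactly supported vector fields `φ` with
`‖φ‖ ≤ 1`; this is the total variation `|Dχ_A|(ℝⁿ)`. -/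
noncomputable def perimeter (n : ℕ) (A : Set (Fin n → ℝ)) : ℝ≥0∞ :=
  ⨆ (φ : (Fin n → ℝ) → (Fin n → ℝ)) (_ : ContDiff ℝ 1 φ) (_ : HasCompactSupport φ)
    (_ : ∀ x, ‖φ x‖ ≤ 1),
      ENNReal.ofReal (∫ x in A, ∑ i : Fin n, fderiv ℝ φ x (Pi.single i 1) i)

namespace Stmt8Aux

variable {n : ℕ}

lemma ofReal_le_perimeter (K : Set (Fin n → ℝ)) (φ : (Fin n → ℝ) → (Fin n → ℝ))
    (h1 : ContDiff ℝ 1 φ) (h2 : HasCompactSupport φ) (h3 : ∀ x, ‖φ x‖ ≤ 1) :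
    ENNReal.ofReal (∫ x in K, ∑ i : Fin n, fderiv ℝ φ x (Pi.single i 1) i) ≤ perimeter n K := by
  unfold perimeter
  exact le_iSup_of_le φ <| le_iSup_of_le h1 <| le_iSup_of_le h2 <| le_iSup_of_le h3 le_rfl

lemma hasCompactSupport_indicator {K : Set (Fin n → ℝ)} (hKb : Bornology.IsBounded K) :
    HasCompactSupport (K.indicator (1 : (Fin n → ℝ) → ℝ)) := by
  apply HasCompactSupport.of_support_subset_isCompact hKb.isCompact_closure
  exact Set.support_indicator_subset.trans subset_closure

lemma volume_lt_top {K : Set (Fin n → ℝ)} (hKb : Bornology.IsBounded K) : volume K < ⊤ := by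
  obtain ⟨R, hR⟩ := hKb.subset_closedBall 0
  exact lt_of_le_of_lt (measure_mono hR) (measure_closedBall_lt_top)

lemma integrable_indicator' {K : Set (Fin n → ℝ)} (hK : MeasurableSet K)
    (hKb : Bornology.IsBounded K) :
    Integrable (K.indicator (1 : (Fin n → ℝ) → ℝ)) := by
  rw [integrable_indicator_iff hK]
  exact integrableOn_const (volume_lt_top hKb).ne

lemma opNorm_le_sum (L : (Fin n → ℝ) →L[ℝ] ℝ) : ‖L‖ ≤ ∑ i, |L (Pi.single i 1)| := by
  apply ContinuousLinearMap.opNorm_le_bound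
  · positivity
  · intro v
    have hv : v = ∑ i, v i • (Pi.single i (1:ℝ) : Fin n → ℝ) := by
      funext j
      simp [Finset.sum_apply, Pi.single_apply]
    calc ‖L v‖ = |∑ i, v i * L (Pi.single i 1)| := by
          conv_lhs => rw [congrArg L hv]
          rw [map_sum]
          simp only [L.map_smul, smul_eq_mul]
          rfl
      _ ≤ ∑ i, |v i * L (Pi.single i 1)| := Finset.abs_sum_le_sum_abs _ _
      _ ≤ ∑ i, ‖v‖ * |L (Pi.single i 1)| := by
          apply Finset.sum_le_sum
          intro i _
          rw [abs_mul]
          gcongr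
          exact norm_le_pi_norm v i
      _ = (∑ i, |L (Pi.single i 1)|) * ‖v‖ := by rw [Finset.sum_mul]; exact Finset.sum_congr rfl fun i _ => mul_comm _ _

lemma fderiv_apply_pi {m : ℕ} {f : (Fin n → ℝ) → (Fin m → ℝ)} {x v : Fin n → ℝ}
    (hf : ∀ i, DifferentiableAt ℝ (fun y => f y i) x) (i : Fin m) :
    fderiv ℝ f x v i = fderiv ℝ (fun y => f y i) x v := by
  have : f = fun y j => f y j := rfl
  rw [this, fderiv_pi hf]
  rfl


lemma conv_mul_integral {K : Set (Fin n → ℝ)} (hK : MeasurableSet K)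
    (hKb : Bornology.IsBounded K)
    {θ g : (Fin n → ℝ) → ℝ} (hθc : Continuous θ) (hθs : HasCompactSupport θ)
    (hgc : Continuous g) (hgb : ∀ x, |g x| ≤ 1) :
    ∫ x, g x * (θ ⋆[ContinuousLinearMap.lsmul ℝ ℝ, volume] K.indicator 1) x
      = ∫ s in K, ∫ x, g x * θ (x - s) := by
  have hχi : Integrable (K.indicator (1 : (Fin n → ℝ) → ℝ)) := integrable_indicator' hK hKb
  have hθi : Integrable θ := hθc.integrable_of_hasCompactSupport hθs
  have h0 : Integrable (fun p : (Fin n → ℝ) × (Fin n → ℝ) =>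
      K.indicator (1 : (Fin n → ℝ) → ℝ) p.2 * θ (p.1 - p.2)) (volume.prod volume) := by
    have := hχi.convolution_integrand (ContinuousLinearMap.lsmul ℝ ℝ) hθi
    simpa using this
  have hF : Integrable (fun p : (Fin n → ℝ) × (Fin n → ℝ) =>
      g p.1 * (K.indicator (1 : (Fin n → ℝ) → ℝ) p.2 * θ (p.1 - p.2))) (volume.prod volume) :=
    h0.bdd_mul ((hgc.comp continuous_fst).aestronglyMeasurable)
      (c := 1) (ae_of_all _ fun p => by simpa using hgb p.1)
  calc ∫ x, g x * (θ ⋆[ContinuousLinearMap.lsmul ℝ ℝ, volume] K.indicator 1) x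
      = ∫ x, ∫ t, g x * (K.indicator (1 : (Fin n → ℝ) → ℝ) t * θ (x - t)) := by
        congr 1; funext x
        rw [convolution_eq_swap, ← integral_const_mul]
        congr 1; funext t
        simp [mul_comm]
    _ = ∫ t, ∫ x, g x * (K.indicator (1 : (Fin n → ℝ) → ℝ) t * θ (x - t)) :=
        integral_integral_swap hF
    _ = ∫ t, K.indicator (1 : (Fin n → ℝ) → ℝ) t * ∫ x, g x * θ (x - t) := by
        congr 1; funext t
        rw [← integral_const_mul]
        congr 1; funext x; ring
    _ = ∫ t in K, ∫ x, g x * θ (x - t) := by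
        rw [← integral_indicator hK]
        congr 1; funext t
        by_cases ht : t ∈ K <;> simp [ht]


variable (b : ContDiffBump (0 : Fin n → ℝ))

lemma theta_neg (i : Fin n) (z : Fin n → ℝ) :
    fderiv ℝ (b.normed volume) (-z) (Pi.single i 1)
      = -(fderiv ℝ (b.normed volume) z (Pi.single i 1)) := by
  have hN : Differentiable ℝ (b.normed volume) :=
    (b.contDiff_normed (n := 1)).differentiable (by simp)
  have h2 : HasFDerivAt (fun x : Fin n → ℝ => -x)
      (-(ContinuousLinearMap.id ℝ (Fin n → ℝ))) z := (hasFDerivAt_id z).neg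
  have h1 : HasFDerivAt (fun x => b.normed volume (-x))
      ((fderiv ℝ (b.normed volume) (-z)).comp (-(ContinuousLinearMap.id ℝ (Fin n → ℝ)))) z :=
    (hN (-z)).hasFDerivAt.comp z h2
  have h3 : (fun x => b.normed volume (-x)) = b.normed volume := funext fun x => b.normed_neg x
  rw [h3] at h1
  rw [h1.fderiv]
  simp

lemma theta_cont (i : Fin n) :
    Continuous fun t => fderiv ℝ (b.normed volume) t (Pi.single i 1) := by
  have h : Continuous (fderiv ℝ (b.normed volume)) :=
    (b.contDiff_normed (n := 1)).continuous_fderiv (by simp)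
  exact (ContinuousLinearMap.apply ℝ ℝ (Pi.single i (1:ℝ))).continuous.comp h

lemma theta_supp (i : Fin n) :
    HasCompactSupport fun t => fderiv ℝ (b.normed volume) t (Pi.single i 1) := by
  have h := ((b.hasCompactSupport_normed (μ := volume)).fderiv (𝕜 := ℝ))
  exact h.comp_left (g := fun L : (Fin n → ℝ) →L[ℝ] ℝ => L (Pi.single i 1)) rfl

lemma fderiv_conv_indicator_apply {K : Set (Fin n → ℝ)} (hK : MeasurableSet K)
    (hKb : Bornology.IsBounded K) (i : Fin n) (x : Fin n → ℝ) :
    fderiv ℝ (b.normed volume ⋆[ContinuousLinearMap.lsmul ℝ ℝ, volume]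
        K.indicator (1 : (Fin n → ℝ) → ℝ)) x (Pi.single i 1)
      = ((fun t => fderiv ℝ (b.normed volume) t (Pi.single i 1))
          ⋆[ContinuousLinearMap.lsmul ℝ ℝ, volume] K.indicator (1 : (Fin n → ℝ) → ℝ)) x := by
  have hχ : LocallyIntegrable (K.indicator (1 : (Fin n → ℝ) → ℝ)) volume :=
    (integrable_indicator' hK hKb).locallyIntegrable
  have hd := (b.hasCompactSupport_normed (μ := volume)).hasFDerivAt_convolution_left
      (ContinuousLinearMap.lsmul ℝ ℝ) (b.contDiff_normed (n := 1)) hχ x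
  rw [hd.fderiv]
  have hint : ConvolutionExistsAt (fderiv ℝ (b.normed volume)) (K.indicator (1 : (Fin n → ℝ) → ℝ)) x
      (ContinuousLinearMap.precompL (Fin n → ℝ) (ContinuousLinearMap.lsmul ℝ ℝ)) volume :=
    HasCompactSupport.convolutionExists_left _
      ((b.hasCompactSupport_normed (μ := volume)).fderiv (𝕜 := ℝ))
      ((b.contDiff_normed (n := 1)).continuous_fderiv (by simp)) hχ x
  rw [convolution_def, ContinuousLinearMap.integral_apply hint, convolution_def]
  simp

lemma fderiv_conv_bump_apply {g : (Fin n → ℝ) → ℝ} (hgc : Continuous g)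
    (i : Fin n) (x : Fin n → ℝ) :
    fderiv ℝ (g ⋆[ContinuousLinearMap.lsmul ℝ ℝ, volume] b.normed volume) x (Pi.single i 1)
      = (g ⋆[ContinuousLinearMap.lsmul ℝ ℝ, volume]
          (fun t => fderiv ℝ (b.normed volume) t (Pi.single i 1))) x := by
  have hgl : LocallyIntegrable g volume := hgc.locallyIntegrable
  have hd := (b.hasCompactSupport_normed (μ := volume)).hasFDerivAt_convolution_right
      (ContinuousLinearMap.lsmul ℝ ℝ) hgl (b.contDiff_normed (n := 1)) x
  rw [hd.fderiv]
  have hint : ConvolutionExistsAt g (fderiv ℝ (b.normed volume)) x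
      (ContinuousLinearMap.precompR (Fin n → ℝ) (ContinuousLinearMap.lsmul ℝ ℝ)) volume :=
    HasCompactSupport.convolutionExists_right _
      ((b.hasCompactSupport_normed (μ := volume)).fderiv (𝕜 := ℝ)) hgl
      ((b.contDiff_normed (n := 1)).continuous_fderiv (by simp)) x
  rw [convolution_def, ContinuousLinearMap.integral_apply hint, convolution_def]
  simp


-- MAIN DUALITY LEMMA
lemma sum_integral_abs_fderiv_le {K : Set (Fin n → ℝ)} (hK : MeasurableSet K)
    (hKb : Bornology.IsBounded K) :
    ENNReal.ofReal (∑ i : Fin n, ∫ x,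
        |((fun t => fderiv ℝ (b.normed volume) t (Pi.single i 1))
            ⋆[ContinuousLinearMap.lsmul ℝ ℝ, volume] K.indicator (1 : (Fin n → ℝ) → ℝ)) x|)
      ≤ perimeter n K := by
  set χ := K.indicator (1 : (Fin n → ℝ) → ℝ) with hχdef
  set N := b.normed volume with hNdef
  set θ : Fin n → (Fin n → ℝ) → ℝ := fun i t => fderiv ℝ N t (Pi.single i 1) with hθdef
  set D : Fin n → (Fin n → ℝ) → ℝ :=
    fun i => (θ i) ⋆[ContinuousLinearMap.lsmul ℝ ℝ, volume] χ with hDdef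
  have hχi : Integrable χ := integrable_indicator' hK hKb
  have hχl : LocallyIntegrable χ volume := hχi.locallyIntegrable
  have hχs : HasCompactSupport χ := hasCompactSupport_indicator hKb
  have hDc : ∀ i, Continuous (D i) := fun i =>
    (theta_supp b i).continuous_convolution_left _ (theta_cont b i) hχl
  have hDs : ∀ i, HasCompactSupport (D i) := fun i =>
    (theta_supp b i).convolution _ hχs
  have hDi : ∀ i, Integrable (D i) := fun i =>
    (hDc i).integrable_of_hasCompactSupport (hDs i)
  -- the approximating fields
  set η : ℕ → ℝ := fun j => 1 / (j + 1) with hηdef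
  have hηpos : ∀ j, 0 < η j := fun j => by positivity
  set g : ℕ → Fin n → (Fin n → ℝ) → ℝ :=
    fun j i x => D i x / Real.sqrt ((D i x) ^ 2 + (η j) ^ 2) with hgdef
  have hsqrt_pos : ∀ j i x, 0 < Real.sqrt ((D i x) ^ 2 + (η j) ^ 2) := by
    intro j i x
    apply Real.sqrt_pos.2
    have := hηpos j
    positivity
  have hgc : ∀ j i, Continuous (g j i) := by
    intro j i
    apply (hDc i).div
    · exact Real.continuous_sqrt.comp (((hDc i).pow 2).add continuous_const)
    · exact fun x => (hsqrt_pos j i x).ne'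
  have hgb : ∀ j i x, |g j i x| ≤ 1 := by
    intro j i x
    rw [abs_div, abs_of_nonneg (Real.sqrt_nonneg _), div_le_one (hsqrt_pos j i x)]
    calc |D i x| = Real.sqrt ((D i x) ^ 2) := (Real.sqrt_sq_eq_abs _).symm
      _ ≤ Real.sqrt ((D i x) ^ 2 + (η j) ^ 2) := by
          apply Real.sqrt_le_sqrt; nlinarith [sq_nonneg (η j)]
  have hgs : ∀ j i, HasCompactSupport (g j i) := by
    intro j i
    apply HasCompactSupport.of_support_subset_isCompact (hDs i)
    intro x hx
    have : D i x ≠ 0 := by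
      intro h0
      apply hx
      simp [hgdef, h0]
    exact subset_tsupport _ this
  set w : ℕ → Fin n → (Fin n → ℝ) → ℝ :=
    fun j i => (g j i) ⋆[ContinuousLinearMap.lsmul ℝ ℝ, volume] N with hwdef
  have hwcd : ∀ j i, ContDiff ℝ 1 (w j i) :=
    fun j i => (b.hasCompactSupport_normed).contDiff_convolution_right _
      ((hgc j i).locallyIntegrable) (b.contDiff_normed (n := 1))
  have hwcs : ∀ j i, HasCompactSupport (w j i) :=
    fun j i => (hgs j i).convolution _ (b.hasCompactSupport_normed)
  have hwb : ∀ j i x, |w j i x| ≤ 1 := by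
    intro j i x
    have hNx : Integrable (fun t => N (x - t)) := by
      rw [integrable_comp_sub_left]
      exact b.integrable_normed
    have hint1 : Integrable (fun t => g j i t * N (x - t)) :=
      hNx.bdd_mul ((hgc j i).aestronglyMeasurable) (c := 1) (ae_of_all _ fun t => by simpa using hgb j i t)
    have hw_eq : w j i x = ∫ t, g j i t * N (x - t) := by
      simp only [hwdef, convolution_def, ContinuousLinearMap.lsmul_apply, smul_eq_mul]
    calc |w j i x| = |∫ t, g j i t * N (x - t)| := by rw [hw_eq]
      _ ≤ ∫ t, |g j i t| * |N (x - t)| := by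
          simpa [abs_mul] using norm_integral_le_integral_norm (fun t => g j i t * N (x - t))
      _ ≤ ∫ t, N (x - t) := by
          refine integral_mono (hint1.abs.congr (ae_of_all _ fun t => abs_mul _ _)) hNx fun t => ?_
          rw [abs_of_nonneg (b.nonneg_normed _)]
          exact mul_le_of_le_one_left (b.nonneg_normed _) (hgb j i t)
      _ = 1 := by rw [integral_sub_left_eq_self]; exact b.integral_normed
  -- the vector fields
  set Φ : ℕ → (Fin n → ℝ) → (Fin n → ℝ) := fun j x i => -(w j i x) with hΦdef
  have hΦ1 : ∀ j, ContDiff ℝ 1 (Φ j) := by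
    intro j
    apply contDiff_pi.2
    intro i
    exact (hwcd j i).neg
  have hΦ2 : ∀ j, HasCompactSupport (Φ j) := by
    intro j
    have hcpt : IsCompact (⋃ i : Fin n, tsupport (w j i)) :=
      isCompact_iUnion fun i => hwcs j i
    apply HasCompactSupport.of_support_subset_isCompact hcpt
    intro x hx
    rcases Function.ne_iff.1 hx with ⟨i, hi⟩
    refine Set.mem_iUnion.2 ⟨i, subset_tsupport _ ?_⟩
    intro h0
    apply hi
    simp [hΦdef, h0]
  have hΦ3 : ∀ j x, ‖Φ j x‖ ≤ 1 := by
    intro j x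
    rw [pi_norm_le_iff_of_nonneg (by norm_num : (0:ℝ) ≤ 1)]
    intro i
    simp only [hΦdef, Real.norm_eq_abs, abs_neg]
    exact hwb j i x
  -- the key identity
  have key : ∀ j, (∑ i, ∫ x, g j i x * D i x)
      = ∫ x in K, ∑ i, fderiv ℝ (Φ j) x (Pi.single i 1) i := by
    intro j
    have hker : ∀ i s, fderiv ℝ (Φ j) s (Pi.single i 1) i
        = -(fderiv ℝ (w j i) s (Pi.single i 1)) := by
      intro i s
      rw [fderiv_apply_pi]
      · have : (fun y => Φ j y i) = fun y => -(w j i y) := rfl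
        rw [this, fderiv_fun_neg]
        simp
      · intro k
        exact (((hwcd j k).differentiable (by simp)) s).neg
    have hstep : ∀ i, ∫ x, g j i x * D i x
        = ∫ s in K, -(fderiv ℝ (w j i) s (Pi.single i 1)) := by
      intro i
      simp only [hDdef, hθdef, hNdef, hχdef]
      rw [conv_mul_integral hK hKb (theta_cont b i) (theta_supp b i) (hgc j i) (hgb j i)]
      apply setIntegral_congr_fun hK
      intro s _
      simp only [hwdef, hNdef]
      rw [fderiv_conv_bump_apply b (hgc j i) i s, convolution_def, ← integral_neg]
      congr 1; funext t
      have hodd : fderiv ℝ (b.normed volume) (t - s) (Pi.single i 1)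
          = -(fderiv ℝ (b.normed volume) (s - t) (Pi.single i 1)) := by
        have h := theta_neg b i (s - t)
        rwa [neg_sub] at h
      simp only [ContinuousLinearMap.lsmul_apply, smul_eq_mul]
      rw [hodd]; ring
    rw [Finset.sum_congr rfl fun i _ => hstep i]
    rw [← integral_finset_sum]
    · apply setIntegral_congr_fun hK
      intro s _
      exact (Finset.sum_congr rfl fun i _ => (hker i s).symm)
    · intro i _
      apply Integrable.integrableOn
      have hcont : Continuous fun s => fderiv ℝ (w j i) s (Pi.single i 1) := by
        have h1 : Continuous (fderiv ℝ (w j i)) := (hwcd j i).continuous_fderiv (by simp)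
        exact (ContinuousLinearMap.apply ℝ ℝ (Pi.single i (1:ℝ))).continuous.comp h1
      have hsupp : HasCompactSupport fun s => fderiv ℝ (w j i) s (Pi.single i 1) :=
        ((hwcs j i).fderiv ℝ).comp_left (g := fun L : (Fin n → ℝ) →L[ℝ] ℝ => L (Pi.single i 1)) rfl
      exact (hcont.integrable_of_hasCompactSupport hsupp).neg
  -- perimeter bound for each j
  have hperim : ∀ j, ENNReal.ofReal (∑ i, ∫ x, g j i x * D i x) ≤ perimeter n K := by
    intro j
    rw [key j]
    exact ofReal_le_perimeter K (Φ j) (hΦ1 j) (hΦ2 j) (hΦ3 j)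
  -- convergence as j → ∞
  have hconv : Tendsto (fun j => ∑ i, ∫ x, g j i x * D i x) atTop
      (𝓝 (∑ i : Fin n, ∫ x, |D i x|)) := by
    apply tendsto_finset_sum
    intro i _
    apply tendsto_integral_of_dominated_convergence (fun x => |D i x|)
    · intro j
      exact ((hgc j i).mul (hDc i)).aestronglyMeasurable
    · exact (hDi i).abs
    · intro j
      apply ae_of_all
      intro x
      rw [Real.norm_eq_abs, abs_mul]
      calc |g j i x| * |D i x| ≤ 1 * |D i x| :=
            mul_le_mul_of_nonneg_right (hgb j i x) (abs_nonneg _)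
        _ = |D i x| := one_mul _
    · apply ae_of_all
      intro x
      by_cases h0 : D i x = 0
      · simpa [hgdef, h0] using (tendsto_const_nhds : Tendsto (fun _ : ℕ => (0:ℝ)) atTop (𝓝 0))
      · have hD2 : 0 < (D i x) ^ 2 := by rw [← sq_abs]; exact pow_pos (abs_pos.2 h0) 2
        have hcont : ContinuousAt (fun e : ℝ => D i x * (D i x / Real.sqrt ((D i x) ^ 2 + e ^ 2))) 0 := by
          apply ContinuousAt.mul continuousAt_const
          apply ContinuousAt.div continuousAt_const
          · exact (Real.continuous_sqrt.comp (by fun_prop)).continuousAt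
          · exact (Real.sqrt_pos.2 (by nlinarith [hD2])).ne'
        have hη0 : Tendsto η atTop (𝓝 0) := by
          simpa [hηdef] using tendsto_one_div_add_atTop_nhds_zero_nat (𝕜 := ℝ)
        have := (hcont.tendsto).comp hη0
        simp only [Function.comp_def] at this
        have habs : |D i x| ≠ 0 := abs_ne_zero.2 h0
        have hval : D i x * (D i x / Real.sqrt ((D i x) ^ 2 + (0:ℝ) ^ 2)) = |D i x| := by
          rw [zero_pow (by norm_num : (2:ℕ) ≠ 0), add_zero, Real.sqrt_sq_eq_abs]
          have h2 : D i x * (D i x / |D i x|) = (D i x * D i x) / |D i x| := by ring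
          rw [h2, ← abs_mul_abs_self (D i x), mul_div_assoc, div_self habs, mul_one]
        rw [hval] at this
        refine this.congr fun j => ?_
        simp only [Function.comp_apply, hgdef]
        ring
  -- conclude
  have := (ENNReal.continuous_ofReal.continuousAt).tendsto.comp hconv
  exact le_of_tendsto this (Eventually.of_forall hperim)


-- NEW: Lemma E
lemma lintegral_nnnorm_fderiv_le {K : Set (Fin n → ℝ)} (hK : MeasurableSet K)
    (hKb : Bornology.IsBounded K) :
    ∫⁻ x, ‖fderiv ℝ (b.normed volume ⋆[ContinuousLinearMap.lsmul ℝ ℝ, volume]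
        K.indicator (1 : (Fin n → ℝ) → ℝ)) x‖₊
      ≤ perimeter n K := by
  have hχl : LocallyIntegrable (K.indicator (1 : (Fin n → ℝ) → ℝ)) volume :=
    (integrable_indicator' hK hKb).locallyIntegrable
  set D : Fin n → (Fin n → ℝ) → ℝ := fun i => ((fun t => fderiv ℝ (b.normed volume) t
      (Pi.single i 1)) ⋆[ContinuousLinearMap.lsmul ℝ ℝ, volume]
        K.indicator (1 : (Fin n → ℝ) → ℝ)) with hDdef
  have hDc : ∀ i, Continuous (D i) := fun i =>
    (theta_supp b i).continuous_convolution_left _ (theta_cont b i) hχl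
  have hDs : ∀ i, HasCompactSupport (D i) := fun i =>
    (theta_supp b i).convolution _ (hasCompactSupport_indicator hKb)
  have hDi : ∀ i, Integrable (D i) := fun i =>
    (hDc i).integrable_of_hasCompactSupport (hDs i)
  calc ∫⁻ x, ‖fderiv ℝ (b.normed volume ⋆[ContinuousLinearMap.lsmul ℝ ℝ, volume]
        K.indicator (1 : (Fin n → ℝ) → ℝ)) x‖₊
      ≤ ∫⁻ x, ∑ i : Fin n, ENNReal.ofReal |D i x| := by
        apply lintegral_mono
        intro x
        dsimp only
        rw [← enorm_eq_nnnorm, ← ofReal_norm]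
        calc ENNReal.ofReal ‖fderiv ℝ (b.normed volume ⋆[ContinuousLinearMap.lsmul ℝ ℝ, volume]
              K.indicator (1 : (Fin n → ℝ) → ℝ)) x‖
            ≤ ENNReal.ofReal (∑ i : Fin n, |D i x|) := by
              apply ENNReal.ofReal_le_ofReal
              refine le_trans (opNorm_le_sum _) ?_
              apply le_of_eq
              refine Finset.sum_congr rfl fun i _ => ?_
              rw [fderiv_conv_indicator_apply b hK hKb i x]
          _ = ∑ i : Fin n, ENNReal.ofReal |D i x| :=
              ENNReal.ofReal_sum_of_nonneg fun i _ => abs_nonneg _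
    _ = ∑ i : Fin n, ∫⁻ x, ENNReal.ofReal |D i x| := by
        apply lintegral_finset_sum
        intro i _
        exact (ENNReal.continuous_ofReal.comp (hDc i).abs).measurable
    _ = ENNReal.ofReal (∑ i : Fin n, ∫ x, |D i x|) := by
        rw [ENNReal.ofReal_sum_of_nonneg fun i _ => integral_nonneg fun x => abs_nonneg _]
        refine Finset.sum_congr rfl fun i _ => ?_
        rw [ofReal_integral_eq_lintegral_ofReal (hDi i).abs
          (ae_of_all _ fun x => abs_nonneg _)]
    _ ≤ perimeter n K := sum_integral_abs_fderiv_le b hK hKb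

-- the bump sequence
noncomputable def bk (n : ℕ) (k : ℕ) : ContDiffBump (0 : Fin n → ℝ) :=
  ⟨(k+1 : ℝ)⁻¹, 2*(k+1 : ℝ)⁻¹, by positivity, by
    have h : (0:ℝ) < (k+1 : ℝ)⁻¹ := by positivity
    linarith⟩

lemma bk_rout_tendsto : Tendsto (fun k => (bk n k).rOut) atTop (𝓝 0) := by
  have : Tendsto (fun k : ℕ => 2*(k+1 : ℝ)⁻¹) atTop (𝓝 (2 * 0)) := by
    apply Tendsto.const_mul
    simpa using tendsto_one_div_add_atTop_nhds_zero_nat (𝕜 := ℝ)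
  simpa [bk] using this

lemma ae_tendsto_indicator {K : Set (Fin n → ℝ)} (hK : MeasurableSet K)
    (hKb : Bornology.IsBounded K) :
    ∀ᵐ x₀, Tendsto (fun k => ((bk n k).normed volume ⋆[ContinuousLinearMap.lsmul ℝ ℝ, volume]
        K.indicator (1 : (Fin n → ℝ) → ℝ)) x₀) atTop
        (𝓝 (K.indicator (1 : (Fin n → ℝ) → ℝ) x₀)) := by
  have h2 : ∀ᶠ k in atTop, (bk n k).rOut ≤ (2:ℝ) * (bk n k).rIn :=
    Eventually.of_forall fun k => le_of_eq (by simp [bk])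
  exact ContDiffBump.ae_convolution_tendsto_right_of_locallyIntegrable bk_rout_tendsto h2
    ((integrable_indicator' hK hKb).locallyIntegrable)

-- ISOPERIMETRIC INEQUALITY, n ≥ 2
noncomputable def isoC (n : ℕ) : ℝ≥0 :=
  lintegralPowLePowLIntegralFDerivConst (volume : Measure (Fin n → ℝ)) ((n:ℝ)/((n:ℝ)-1))

lemma isoperimetric (hn2 : 2 ≤ n) {K : Set (Fin n → ℝ)} (hK : MeasurableSet K)
    (hKb : Bornology.IsBounded K) :
    volume K ≤ (isoC n : ℝ≥0∞) * perimeter n K ^ ((n:ℝ)/((n:ℝ)-1)) := by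
  set p : ℝ := (n:ℝ)/((n:ℝ)-1) with hpdef
  have hn1 : (1:ℝ) < (n:ℝ) := by exact_mod_cast hn2
  have hp_pos : 0 < p := by
    apply div_pos (by linarith) (by linarith)
  have hp : Real.HolderConjugate (Module.finrank ℝ (Fin n → ℝ) : ℝ) p := by
    rw [Module.finrank_fin_fun]
    exact Real.HolderConjugate.conjExponent hn1
  set χ := K.indicator (1 : (Fin n → ℝ) → ℝ) with hχdef
  have hχl : LocallyIntegrable χ volume := (integrable_indicator' hK hKb).locallyIntegrable
  have hχs : HasCompactSupport χ := hasCompactSupport_indicator hKb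
  set u : ℕ → (Fin n → ℝ) → ℝ :=
    fun k => (bk n k).normed volume ⋆[ContinuousLinearMap.lsmul ℝ ℝ, volume] χ with hudef
  have hu1 : ∀ k, ContDiff ℝ 1 (u k) := fun k =>
    ((bk n k).hasCompactSupport_normed).contDiff_convolution_left _
      ((bk n k).contDiff_normed (n := 1)) hχl
  have hu2 : ∀ k, HasCompactSupport (u k) := fun k =>
    ((bk n k).hasCompactSupport_normed).convolution _ hχs
  have huc : ∀ k, Continuous (u k) := fun k => (hu1 k).continuous
  -- Sobolev for each k
  have hsob : ∀ k, ∫⁻ x, (‖u k x‖₊ : ℝ≥0∞) ^ p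
      ≤ (isoC n : ℝ≥0∞) * (perimeter n K) ^ p := by
    intro k
    calc ∫⁻ x, (‖u k x‖₊ : ℝ≥0∞) ^ p
        ≤ (isoC n : ℝ≥0∞) * (∫⁻ x, ‖fderiv ℝ (u k) x‖₊) ^ p :=
          lintegral_pow_le_pow_lintegral_fderiv volume (hu1 k) (hu2 k) hp
      _ ≤ (isoC n : ℝ≥0∞) * (perimeter n K) ^ p := by
          gcongr
          exact lintegral_nnnorm_fderiv_le (bk n k) hK hKb
  -- Fatou
  have h_ae := ae_tendsto_indicator hK hKb
  have hvol : volume K = ∫⁻ x, (‖χ x‖₊ : ℝ≥0∞) ^ p := by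
    have h1 : ∀ x, ((‖χ x‖₊ : ℝ≥0∞)) ^ p = K.indicator (fun _ => (1:ℝ≥0∞)) x := by
      intro x
      by_cases hx : x ∈ K
      · simp [hχdef, Set.indicator_of_mem hx, ENNReal.one_rpow]
      · simp [hχdef, Set.indicator_of_notMem hx, ENNReal.zero_rpow_of_pos hp_pos]
    rw [lintegral_congr h1, lintegral_indicator hK]
    simp
  have hfatou : ∫⁻ x, (‖χ x‖₊ : ℝ≥0∞) ^ p
      ≤ liminf (fun k => ∫⁻ x, (‖u k x‖₊ : ℝ≥0∞) ^ p) atTop := by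
    have hmeas : ∀ k, Measurable fun x => (‖u k x‖₊ : ℝ≥0∞) ^ p := fun k =>
      ((huc k).measurable.nnnorm.coe_nnreal_ennreal).pow_const _
    refine le_trans (le_of_eq ?_) (lintegral_liminf_le hmeas)
    apply lintegral_congr_ae
    filter_upwards [h_ae] with x hx
    have hT : Tendsto (fun k => (‖u k x‖₊ : ℝ≥0∞) ^ p) atTop (𝓝 ((‖χ x‖₊ : ℝ≥0∞) ^ p)) := by
      have hcont : Continuous fun r : ℝ => ((‖r‖₊ : ℝ≥0∞)) ^ p :=
        ENNReal.continuous_rpow_const.comp (ENNReal.continuous_coe.comp continuous_nnnorm)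
      exact (hcont.continuousAt.tendsto).comp hx
    exact (hT.liminf_eq).symm
  calc volume K = ∫⁻ x, (‖χ x‖₊ : ℝ≥0∞) ^ p := hvol
    _ ≤ liminf (fun k => ∫⁻ x, (‖u k x‖₊ : ℝ≥0∞) ^ p) atTop := hfatou
    _ ≤ (isoC n : ℝ≥0∞) * (perimeter n K) ^ p :=
        (Filter.liminf_le_liminf (Eventually.of_forall hsob)).trans_eq (Filter.liminf_const _)


-- THE 1-DIMENSIONAL CASE
lemma perimeter_pos_one {K : Set (Fin 1 → ℝ)} (hK : MeasurableSet K)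
    (hKb : Bornology.IsBounded K) (hKpos : 0 < volume K) :
    ENNReal.ofReal (1/2) ≤ perimeter 1 K := by
  set χ := K.indicator (1 : (Fin 1 → ℝ) → ℝ) with hχdef
  have hχl : LocallyIntegrable χ volume := (integrable_indicator' hK hKb).locallyIntegrable
  have hχs : HasCompactSupport χ := hasCompactSupport_indicator hKb
  set u : ℕ → (Fin 1 → ℝ) → ℝ :=
    fun k => (bk 1 k).normed volume ⋆[ContinuousLinearMap.lsmul ℝ ℝ, volume] χ with hudef
  have hu1 : ∀ k, ContDiff ℝ 1 (u k) := fun k =>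
    ((bk 1 k).hasCompactSupport_normed).contDiff_convolution_left _
      ((bk 1 k).contDiff_normed (n := 1)) hχl
  have hu2 : ∀ k, HasCompactSupport (u k) := fun k =>
    ((bk 1 k).hasCompactSupport_normed).convolution _ hχs
  -- find a good point x₀ ∈ K
  have h_ae := ae_tendsto_indicator hK hKb
  have hres : ∀ᵐ x₀ ∂(volume.restrict K), Tendsto (fun k => u k x₀) atTop (𝓝 (χ x₀)) :=
    ae_restrict_of_ae h_ae
  have hmem : ∀ᵐ x₀ ∂(volume.restrict K), x₀ ∈ K := ae_restrict_mem hK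
  have hne : (volume.restrict K) ≠ 0 := by
    intro h
    rw [← Measure.restrict_apply_univ K, h] at hKpos
    simp at hKpos
  haveI : (ae (volume.restrict K)).NeBot := ae_neBot.2 hne
  obtain ⟨x₀, hx₀mem, hx₀t⟩ := (hmem.and hres).exists
  rw [hχdef, Set.indicator_of_mem hx₀mem] at hx₀t
  simp only [Pi.one_apply] at hx₀t
  obtain ⟨k, hk⟩ := (hx₀t.eventually (eventually_gt_nhds (by norm_num : (1:ℝ)/2 < 1))).exists
  -- setup the 1-d reduction
  set L : ℝ →L[ℝ] (Fin 1 → ℝ) :=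
    ContinuousLinearMap.pi (fun _ : Fin 1 => ContinuousLinearMap.id ℝ ℝ) with hLdef
  have hLx : ∀ y : Fin 1 → ℝ, L (y 0) = y := by
    intro y
    funext j
    rw [Subsingleton.elim j 0]
    rfl
  have hP : (Pi.single (0 : Fin 1) (1:ℝ)) = L 1 := by
    funext j
    rw [Subsingleton.elim j 0]
    simp [hLdef]
  set U : ℝ → ℝ := fun t => u k (L t) with hUdef
  set f' : ℝ → ℝ := fun t => fderiv ℝ (u k) (L t) (Pi.single 0 1) with hf'def
  have hU' : ∀ t, HasDerivAt U (f' t) t := by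
    intro t
    have h1 : HasFDerivAt (u k) (fderiv ℝ (u k) (L t)) (L t) :=
      (((hu1 k).differentiable (by simp)) (L t)).hasFDerivAt
    have h2 : HasDerivAt (fun s : ℝ => L s) (L 1) t := L.hasDerivAt
    have h3 := h1.comp_hasDerivAt t h2
    show HasDerivAt U (fderiv ℝ (u k) (L t) (Pi.single (0 : Fin 1) (1:ℝ))) t
    rw [hP]
    exact h3
  have hf'c : Continuous f' := by
    have h1 : Continuous (fderiv ℝ (u k)) := (hu1 k).continuous_fderiv (by simp)
    exact (ContinuousLinearMap.apply ℝ ℝ (Pi.single (0 : Fin 1) (1:ℝ))).continuous.comp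
      (h1.comp L.continuous)
  -- U is u k composed with the homeomorphism funUnique.symm
  have hUs : HasCompactSupport U := by
    have h := (hu2 k).comp_homeomorph (Homeomorph.funUnique (Fin 1) ℝ).symm
    have heq2 : U = (u k) ∘ (Homeomorph.funUnique (Fin 1) ℝ).symm := by
      funext t
      rfl
    rwa [heq2]
  -- choose a below the support
  obtain ⟨R, hR⟩ := hUs.isBounded.subset_closedBall 0
  set t₀ : ℝ := x₀ 0 with ht₀def
  set a : ℝ := min (-(|R|+1)) t₀ with hadef
  have hat₀ : a ≤ t₀ := min_le_right _ _
  have ha_not : a ∉ tsupport U := by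
    intro hmem'
    have h1 : dist a 0 ≤ R := hR hmem'
    rw [Real.dist_eq, sub_zero] at h1
    have h2 : a ≤ -(|R|+1) := min_le_left _ _
    have h3 : -|a| ≤ a := neg_abs_le a
    have h4 : R ≤ |R| := le_abs_self R
    linarith
  have hUa : U a = 0 := image_eq_zero_of_notMem_tsupport ha_not
  have hFTC : ∫ t in a..t₀, f' t = U t₀ - U a :=
    intervalIntegral.integral_eq_sub_of_hasDerivAt (fun t _ => hU' t)
      (hf'c.intervalIntegrable a t₀)
  have hUt₀ : U t₀ = u k x₀ := by rw [hUdef]; simp only []; rw [hLx x₀]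
  -- f' has compact support and is integrable
  have hf's : HasCompactSupport f' := by
    have hD : HasCompactSupport fun y => fderiv ℝ (u k) y (Pi.single (0:Fin 1) (1:ℝ)) :=
      ((hu2 k).fderiv ℝ).comp_left (g := fun M : (Fin 1 → ℝ) →L[ℝ] ℝ => M (Pi.single 0 1)) rfl
    have h := hD.comp_homeomorph (Homeomorph.funUnique (Fin 1) ℝ).symm
    have heq : f' = (fun y => fderiv ℝ (u k) y (Pi.single (0:Fin 1) (1:ℝ)))
        ∘ (Homeomorph.funUnique (Fin 1) ℝ).symm := by
      funext t
      rfl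
    rwa [heq]
  have hf'i : Integrable f' := hf'c.integrable_of_hasCompactSupport hf's
  -- the chain of inequalities
  have hchain : (1:ℝ)/2 ≤ ∫ t, |f' t| := by
    calc (1:ℝ)/2 ≤ u k x₀ := le_of_lt hk
      _ = U t₀ - U a := by rw [hUt₀, hUa, sub_zero]
      _ = ∫ t in a..t₀, f' t := hFTC.symm
      _ ≤ |∫ t in a..t₀, f' t| := le_abs_self _
      _ ≤ ∫ t in a..t₀, |f' t| := intervalIntegral.abs_integral_le_integral_abs hat₀
      _ = ∫ t in Set.Ioc a t₀, |f' t| := intervalIntegral.integral_of_le hat₀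
      _ ≤ ∫ t, |f' t| := by
          apply setIntegral_le_integral hf'i.abs
          exact ae_of_all _ fun t => abs_nonneg _
  -- transfer to the pi space
  have htrans : ∫ t, |f' t| = ∫ y : Fin 1 → ℝ, |fderiv ℝ (u k) y (Pi.single 0 1)| := by
    have hmp := volume_preserving_funUnique (Fin 1) ℝ
    have hemb := (MeasurableEquiv.funUnique (Fin 1) ℝ).measurableEmbedding
    rw [← hmp.integral_comp hemb (fun t => |f' t|)]
    apply integral_congr_ae
    apply ae_of_all
    intro y
    simp only [hf'def]
    have hyy : L ((MeasurableEquiv.funUnique (Fin 1) ℝ) y) = y := hLx y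
    rw [hyy]
  -- conclude via the duality bound
  have hD0 : ∀ y, fderiv ℝ (u k) y (Pi.single 0 1)
      = ((fun t => fderiv ℝ ((bk 1 k).normed volume) t (Pi.single (0:Fin 1) 1))
          ⋆[ContinuousLinearMap.lsmul ℝ ℝ, volume] K.indicator (1 : (Fin 1 → ℝ) → ℝ)) y :=
    fun y => fderiv_conv_indicator_apply (bk 1 k) hK hKb 0 y
  calc ENNReal.ofReal (1/2) ≤ ENNReal.ofReal (∫ t, |f' t|) := ENNReal.ofReal_le_ofReal hchain
    _ = ENNReal.ofReal (∑ i : Fin 1, ∫ x,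
        |((fun t => fderiv ℝ ((bk 1 k).normed volume) t (Pi.single i 1))
            ⋆[ContinuousLinearMap.lsmul ℝ ℝ, volume] K.indicator (1 : (Fin 1 → ℝ) → ℝ)) x|) := by
        rw [Fin.sum_univ_one, htrans]
        congr 1
        apply integral_congr_ae (ae_of_all _ fun y => ?_)
        rw [hD0 y]
    _ ≤ perimeter 1 K := sum_integral_abs_fderiv_le (bk 1 k) hK hKb


end Stmt8Aux

open Stmt8Aux

/-- there is `C = C(n) > 0` such that: if a bounded set `A ⊆ ℝⁿ` of finite
perimeter with `|A| > 0` is a finite disjoint union of sets `K₁, …, K_m` of finite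
perimeter, each of measure `< 2ε`, then `|A| ≤ C ε^{1/n} ∑ᵢ P(Kᵢ, ℝⁿ)`. -/
theorem stmt8 (n : ℕ) (hn : 1 ≤ n) :
    ∃ C : ℝ, 0 < C ∧
      ∀ (A : Set (Fin n → ℝ)), MeasurableSet A → Bornology.IsBounded A →
        perimeter n A < ⊤ → 0 < volume A →
        ∀ (ε : ℝ), 0 < ε →
        ∀ (m : ℕ) (K : Fin m → Set (Fin n → ℝ)),
          (∀ i, MeasurableSet (K i)) →
          (Pairwise (Function.onFun Disjoint K)) →
          (A = ⋃ i : Fin m, K i) →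
          (∀ i, perimeter n (K i) < ⊤) →
          (∀ i, volume (K i) < ENNReal.ofReal (2 * ε)) →
          volume A ≤ ENNReal.ofReal (C * ε ^ ((1 : ℝ) / n)) *
            ∑ i : Fin m, perimeter n (K i) := by
  obtain hn1 | hn2 : n = 1 ∨ 2 ≤ n := by omega
  · -- n = 1
    subst hn1
    refine ⟨4, by norm_num, ?_⟩
    intro A hA hAb hAper hApos ε hε m K hKm hKd hAU hKper hKlt
    have hKib : ∀ i, Bornology.IsBounded (K i) := by
      intro i
      apply hAb.subset
      rw [hAU]
      exact Set.subset_iUnion _ i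
    have hexp : (4:ℝ) * ε ^ ((1:ℝ)/(1:ℕ)) = 4 * ε := by
      norm_num
    have piece : ∀ i, volume (K i)
        ≤ ENNReal.ofReal (4 * ε ^ ((1:ℝ)/(1:ℕ))) * perimeter 1 (K i) := by
      intro i
      by_cases hV0 : volume (K i) = 0
      · rw [hV0]; exact zero_le
      · have hpos : 0 < volume (K i) := pos_iff_ne_zero.2 hV0
        have hhalf := perimeter_pos_one (hKm i) (hKib i) hpos
        calc volume (K i) ≤ ENNReal.ofReal (2*ε) := (hKlt i).le
          _ = ENNReal.ofReal (4 * ε ^ ((1:ℝ)/(1:ℕ))) * ENNReal.ofReal (1/2) := by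
              rw [hexp, ← ENNReal.ofReal_mul (by positivity)]
              congr 1
              ring
          _ ≤ ENNReal.ofReal (4 * ε ^ ((1:ℝ)/(1:ℕ))) * perimeter 1 (K i) :=
              mul_le_mul_right hhalf _
    calc volume A = ∑ i, volume (K i) := by
          rw [hAU, measure_iUnion hKd hKm, tsum_fintype]
      _ ≤ ∑ i, ENNReal.ofReal (4 * ε ^ ((1:ℝ)/(1:ℕ))) * perimeter 1 (K i) :=
          Finset.sum_le_sum fun i _ => piece i
      _ = ENNReal.ofReal (4 * ε ^ ((1:ℝ)/(1:ℕ))) * ∑ i, perimeter 1 (K i) := by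
          rw [Finset.mul_sum]
  · -- n ≥ 2
    have hn1R : (1:ℝ) < n := by exact_mod_cast hn2
    have hn0 : (0:ℝ) < n := by linarith
    have hnne : (n:ℝ) ≠ 0 := ne_of_gt hn0
    have hn1ne : (n:ℝ) - 1 ≠ 0 := ne_of_gt (by linarith)
    set p : ℝ := (n:ℝ)/((n:ℝ)-1) with hpdef
    set q : ℝ := ((n:ℝ)-1)/(n:ℝ) with hqdef
    have hp0 : 0 < p := div_pos (by linarith) (by linarith)
    have hq0 : 0 ≤ q := le_of_lt (div_pos (by linarith) (by linarith))
    have hpq : p * q = 1 := by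
      rw [hpdef, hqdef]
      field_simp
    have hexp1 : (1:ℝ)/n + q = 1 := by
      rw [hqdef]
      field_simp
      ring
    set cr : ℝ := ((isoC n : ℝ≥0) : ℝ) ^ q with hcrdef
    have hcr0 : 0 ≤ cr := Real.rpow_nonneg (isoC n).coe_nonneg q
    refine ⟨2 * (cr + 1), by positivity, ?_⟩
    intro A hA hAb hAper hApos ε hε m K hKm hKd hAU hKper hKlt
    have hKib : ∀ i, Bornology.IsBounded (K i) := by
      intro i
      apply hAb.subset
      rw [hAU]
      exact Set.subset_iUnion _ i
    -- real-side constant inequality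
    have hCreal : (2*ε) ^ ((1:ℝ)/n) * cr ≤ (2 * (cr + 1)) * ε ^ ((1:ℝ)/n) := by
      have h2e : (2*ε) ^ ((1:ℝ)/n) = 2 ^ ((1:ℝ)/n) * ε ^ ((1:ℝ)/n) :=
        Real.mul_rpow (by norm_num) hε.le
      have h2b : (2:ℝ) ^ ((1:ℝ)/n) ≤ 2 := by
        calc (2:ℝ) ^ ((1:ℝ)/n) ≤ 2 ^ (1:ℝ) := by
              apply Real.rpow_le_rpow_of_exponent_le (by norm_num)
              rw [div_le_one hn0]
              exact_mod_cast hn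
          _ = 2 := Real.rpow_one 2
      have hε1 : (0:ℝ) ≤ ε ^ ((1:ℝ)/n) := Real.rpow_nonneg hε.le _
      have h2p : (0:ℝ) ≤ 2 ^ ((1:ℝ)/n) := Real.rpow_nonneg (by norm_num) _
      rw [h2e]
      nlinarith [mul_le_mul_of_nonneg_right (mul_le_mul_of_nonneg_right h2b hcr0) hε1]
    have piece : ∀ i, volume (K i)
        ≤ ENNReal.ofReal ((2 * (cr + 1)) * ε ^ ((1:ℝ)/n)) * perimeter n (K i) := by
      intro i
      by_cases hV0 : volume (K i) = 0
      · rw [hV0]; exact zero_le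
      have hVle : volume (K i) ≤ ENNReal.ofReal (2*ε) := (hKlt i).le
      have hVne : volume (K i) ≠ ⊤ := (lt_of_le_of_lt hVle ENNReal.ofReal_lt_top).ne
      have hiso := isoperimetric hn2 (hKm i) (hKib i)
      have step1 : volume (K i) ^ q ≤ (isoC n : ℝ≥0∞) ^ q * perimeter n (K i) := by
        calc volume (K i) ^ q ≤ ((isoC n : ℝ≥0∞) * perimeter n (K i) ^ p) ^ q :=
              ENNReal.rpow_le_rpow hiso hq0
          _ = (isoC n : ℝ≥0∞) ^ q * perimeter n (K i) := by
              rw [ENNReal.mul_rpow_of_nonneg _ _ hq0, ← ENNReal.rpow_mul, hpq,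
                ENNReal.rpow_one]
      calc volume (K i)
          = volume (K i) ^ ((1:ℝ)/n) * volume (K i) ^ q := by
            rw [← ENNReal.rpow_add _ _ hV0 hVne, hexp1, ENNReal.rpow_one]
        _ ≤ (ENNReal.ofReal (2*ε)) ^ ((1:ℝ)/n)
              * ((isoC n : ℝ≥0∞) ^ q * perimeter n (K i)) :=
            mul_le_mul' (ENNReal.rpow_le_rpow hVle (by positivity)) step1
        _ = ENNReal.ofReal ((2*ε) ^ ((1:ℝ)/n)) * (ENNReal.ofReal cr * perimeter n (K i)) := by
            rw [← ENNReal.ofReal_rpow_of_nonneg (by positivity) (by positivity)]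
            congr 2
            rw [hcrdef, ← ENNReal.ofReal_rpow_of_nonneg (isoC n).coe_nonneg hq0,
              ENNReal.ofReal_coe_nnreal]
        _ = ENNReal.ofReal ((2*ε) ^ ((1:ℝ)/n) * cr) * perimeter n (K i) := by
            rw [ENNReal.ofReal_mul (by positivity), mul_assoc]
        _ ≤ ENNReal.ofReal ((2 * (cr + 1)) * ε ^ ((1:ℝ)/n)) * perimeter n (K i) :=
            mul_le_mul_left (ENNReal.ofReal_le_ofReal hCreal) _
    calc volume A = ∑ i, volume (K i) := by
          rw [hAU, measure_iUnion hKd hKm, tsum_fintype]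
      _ ≤ ∑ i, ENNReal.ofReal ((2 * (cr + 1)) * ε ^ ((1:ℝ)/n)) * perimeter n (K i) :=
          Finset.sum_le_sum fun i _ => piece i
      _ = ENNReal.ofReal ((2 * (cr + 1)) * ε ^ ((1:ℝ)/n)) * ∑ i, perimeter n (K i) := by
          rw [Finset.mul_sum]
end
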